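/- Let F be a differential field of characteristic zero whose field of constants is algebraically closed, let n ≥ 1 and k ≥ 2, and let (y_{ij})_{1≤i,j≤n} be n² elements of a differential field extension L of F that are differentially algebraically independent over F, with L = F⟨y_{ij} : 1 ≤ i,j ≤ n⟩. Let S = {y_{1j}^k : 1 ≤ j ≤ n} ∪ {y_{1j}^{k−1}·y_{ij} : 2 ≤ i ≤ n, 1 ≤ j ≤ n}. Then L = F⟨S⟩(y_{11}, …, y_{1n}) and L is a finite field extension of F⟨S⟩ of degree exactly kⁿ. -/

import Mathlib

open MvPolynomial
set_option synthInstance.maxHeartbeats 1000000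
set_option maxHeartbeats 4000000
section Helpers
variable {L : Type*} [Field L] {δ : L → L}

theorem dz' (hδadd : ∀ a b : L, δ (a + b) = δ a + δ b) : δ 0 = 0 := by
  have h := hδadd 0 0
  rw [add_zero] at h
  exact (left_eq_add.mp h)

theorem done' (hδmul : ∀ a b : L, δ (a * b) = a * δ b + δ a * b) : δ 1 = 0 := by
  have h := hδmul 1 1
  rw [mul_one, one_mul, mul_one] at h
  exact left_eq_add.mp h

theorem dneg' (hδadd : ∀ a b : L, δ (a + b) = δ a + δ b) (a : L) : δ (-a) = -δ a := by
  have h := hδadd a (-a)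
  rw [add_neg_cancel, dz' hδadd] at h
  linear_combination -h

theorem dpow' (hδmul : ∀ a b : L, δ (a * b) = a * δ b + δ a * b) (a : L) :
    ∀ m : ℕ, 1 ≤ m → δ (a ^ m) = m * a ^ (m - 1) * δ a := by
  intro m
  induction m with
  | zero => omega
  | succ m ih =>
    intro _
    rcases Nat.eq_zero_or_pos m with h0 | h1
    · subst h0; simp [pow_one]
    · have h := hδmul a (a ^ m)
      rw [← pow_succ'] at h
      rw [h, ih h1]
      have hm : m - 1 + 1 = m := Nat.succ_pred_eq_of_pos h1
      have : a * (↑m * a ^ (m - 1) * δ a) = ↑m * a ^ m * δ a := by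
        rw [show a * (↑m * a ^ (m - 1) * δ a) = ↑m * (a * a ^ (m-1)) * δ a by ring,
          ← pow_succ' a (m-1), hm]
      rw [this, Nat.add_sub_cancel]
      push_cast
      ring

theorem dinv' (hδadd : ∀ a b : L, δ (a + b) = δ a + δ b)
    (hδmul : ∀ a b : L, δ (a * b) = a * δ b + δ a * b) (a : L) (ha : a ≠ 0) :
    δ a⁻¹ = -δ a * (a⁻¹ * a⁻¹) := by
  have h := hδmul a a⁻¹
  rw [mul_inv_cancel₀ ha, done' hδmul] at h
  have h1 : δ a⁻¹ = a⁻¹ * (a * δ a⁻¹) := by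
    rw [← mul_assoc, inv_mul_cancel₀ ha, one_mul]
  have h2 : a * δ a⁻¹ = -(δ a * a⁻¹) := by linear_combination -h
  rw [h1, h2]; ring

theorem closure_deriv_mem (hδadd : ∀ a b : L, δ (a + b) = δ a + δ b)
    (hδmul : ∀ a b : L, δ (a * b) = a * δ b + δ a * b) {T : Set L}
    (h : ∀ x ∈ T, δ x ∈ Subfield.closure T) :
    ∀ x ∈ Subfield.closure T, δ x ∈ Subfield.closure T := by
  intro x hx
  induction hx using Subfield.closure_induction with
  | mem x hx => exact h x hx
  | one => rw [done' hδmul]; exact zero_mem _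
  | add x y hx hy ihx ihy => rw [hδadd]; exact add_mem ihx ihy
  | neg x hx ihx => rw [dneg' hδadd]; exact neg_mem ihx
  | inv x hx ihx =>
    rcases eq_or_ne x 0 with rfl | hx0
    · rw [inv_zero]; exact ihx
    · rw [dinv' hδadd hδmul x hx0]
      exact mul_mem (neg_mem ihx) (mul_mem (inv_mem hx) (inv_mem hx))
  | mul x y hx hy ihx ihy => rw [hδmul]; exact add_mem (mul_mem hx ihy) (mul_mem ihx hy)

theorem diffAdjoin_deriv_mem' (hδadd : ∀ a b : L, δ (a + b) = δ a + δ b)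
    (hδmul : ∀ a b : L, δ (a * b) = a * δ b + δ a * b) (F : Subfield L)
    (hFδ : ∀ x ∈ F, δ x ∈ F) (S : Set L) :
    ∀ x ∈ Subfield.closure (↑F ∪ {x | ∃ s ∈ S, ∃ m : ℕ, δ^[m] s = x}),
      δ x ∈ Subfield.closure (↑F ∪ {x | ∃ s ∈ S, ∃ m : ℕ, δ^[m] s = x}) := by
  apply closure_deriv_mem hδadd hδmul
  rintro x (hx | ⟨s, hs, m, rfl⟩)
  · exact Subfield.subset_closure (Or.inl (hFδ x hx))
  · exact Subfield.subset_closure (Or.inr ⟨s, hs, m + 1, Function.iterate_succ_apply' δ m s⟩)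
end Helpers


section Homog
variable {L : Type*} [Field L] {δ : L → L} {F : Subfield L} {ι : Type*} {v : ι → L}
  {bump : ι → ι} {M : Type*} [AddCommMonoid M] {w : ι → M}

theorem weight_single' (s : ι) (b : ℕ) :
    Finsupp.weight w (Finsupp.single s b) = b • w s := by
  rw [Finsupp.weight_apply, Finsupp.sum_single_index]
  simp

theorem isWH_X_pow {R : Type*} [CommSemiring R] (s : ι) (b : ℕ) :
    IsWeightedHomogeneous w (X (R := R) s ^ b) (b • w s) := by
  rw [X_pow_eq_monomial]
  exact isWeightedHomogeneous_monomial w _ _ (weight_single' s b)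

theorem deriv_aeval_monomial
    (hδadd : ∀ a b : L, δ (a + b) = δ a + δ b)
    (hδmul : ∀ a b : L, δ (a * b) = a * δ b + δ a * b)
    (hFδ : ∀ x ∈ F, δ x ∈ F)
    (hv : ∀ s : ι, δ (v s) = v (bump s)) (hw : ∀ s, w (bump s) = w s)
    (m : ι →₀ ℕ) :
    ∀ a : F, ∃ p' : MvPolynomial ι F,
      p'.IsWeightedHomogeneous w (Finsupp.weight w m) ∧
      δ (MvPolynomial.aeval v (MvPolynomial.monomial m a)) = MvPolynomial.aeval v p' := by
  induction m using Finsupp.induction with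
  | zero =>
    intro a
    refine ⟨C ⟨δ ↑a, hFδ _ a.2⟩, ?_, ?_⟩
    · rw [map_zero]; exact isWeightedHomogeneous_C w _
    · rw [monomial_zero', aeval_C, aeval_C]; rfl
  | single_add s b f hs hb ih =>
    intro a
    obtain ⟨p'', hhom, heq⟩ := ih a
    have hb1 : 1 ≤ b := Nat.one_le_iff_ne_zero.mpr hb
    refine ⟨X s ^ b * p'' +
      (b : MvPolynomial ι F) * (X s ^ (b - 1) * (X (bump s) * monomial f a)), ?_, ?_⟩
    · have hdeg : Finsupp.weight w (Finsupp.single s b + f)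
          = b • w s + Finsupp.weight w f := by
        rw [map_add, weight_single']
      rw [hdeg]
      apply IsWeightedHomogeneous.add
      · exact (isWH_X_pow s b).mul hhom
      · have h1 : ((b : MvPolynomial ι F)) = C (b : F) := (map_natCast C b).symm
        have h2 : IsWeightedHomogeneous w ((b : MvPolynomial ι F)) 0 :=
          h1 ▸ isWeightedHomogeneous_C w _
        have h3 : IsWeightedHomogeneous w (X (σ := ι) (R := ↥F) s ^ (b-1)) ((b-1) • w s) :=
          isWH_X_pow s (b-1)
        have h4 : IsWeightedHomogeneous w (X (bump s) * monomial f a)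
            (w s + Finsupp.weight w f) :=
          (hw s ▸ isWeightedHomogeneous_X F w (bump s)).mul
            (isWeightedHomogeneous_monomial w _ _ rfl)
        have h5 := (h2.mul (h3.mul h4))
        have hd2 : (0 : M) + ((b-1) • w s + (w s + Finsupp.weight w f))
            = b • w s + Finsupp.weight w f := by
          rw [zero_add, ← add_assoc, ← succ_nsmul, Nat.sub_add_cancel hb1]
        rwa [hd2] at h5
    · rw [monomial_single_add, map_mul, map_pow, aeval_X, hδmul,
        dpow' hδmul _ b hb1, hv, heq]
      simp only [map_add, map_mul, map_pow, aeval_X, map_natCast]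
      ring

theorem deriv_aeval_homog
    (hδadd : ∀ a b : L, δ (a + b) = δ a + δ b)
    (hδmul : ∀ a b : L, δ (a * b) = a * δ b + δ a * b)
    (hFδ : ∀ x ∈ F, δ x ∈ F)
    (hv : ∀ s : ι, δ (v s) = v (bump s)) (hw : ∀ s, w (bump s) = w s)
    {d : M} {p : MvPolynomial ι F} (hp : p.IsWeightedHomogeneous w d) :
    ∃ p' : MvPolynomial ι F, p'.IsWeightedHomogeneous w d ∧
      δ (MvPolynomial.aeval v p) = MvPolynomial.aeval v p' := by
  choose P hPhom hPeq using fun (m : ι →₀ ℕ) =>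
    deriv_aeval_monomial hδadd hδmul hFδ hv hw m
  refine ⟨∑ m ∈ p.support, P m (coeff m p), ?_, ?_⟩
  · apply IsWeightedHomogeneous.sum
    intro m hm
    exact (hp (mem_support_iff.mp hm)) ▸ hPhom m (coeff m p)
  · conv_lhs => rw [← support_sum_monomial_coeff p]
    rw [map_sum]
    have hδsum : ∀ (t : Finset (ι →₀ ℕ)) (g : (ι →₀ ℕ) → L),
        δ (∑ m ∈ t, g m) = ∑ m ∈ t, δ (g m) :=
      fun t g => map_sum (AddMonoidHom.mk' δ hδadd) g t
    rw [hδsum, map_sum]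
    exact Finset.sum_congr rfl fun m _ => hPeq m (coeff m p)
end Homog

theorem homog_sum_eq_zero {R : Type*} [CommRing R] {ι M E : Type*} [AddCommMonoid M] [Fintype E]
    {w : ι → M} {t : E → MvPolynomial ι R} {dg : E → M}
    (hhom : ∀ e, (t e).IsWeightedHomogeneous w (dg e)) (hinj : Function.Injective dg)
    (hsum : ∑ e, t e = 0) (e : E) : t e = 0 := by
  classical
  by_contra hne
  obtain ⟨m, hm⟩ := MvPolynomial.ne_zero_iff.mp hne
  have h1 : MvPolynomial.coeff m (∑ e', t e') = MvPolynomial.coeff m (t e) := by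
    rw [MvPolynomial.coeff_sum]
    apply Finset.sum_eq_single e
    · intro e' _ hne'
      by_contra hc
      exact hne' (hinj (((hhom e') hc).symm.trans ((hhom e) hm)))
    · intro h; exact absurd (Finset.mem_univ e) h
  rw [hsum, MvPolynomial.coeff_zero] at h1
  exact hm h1.symm


/-- The subfield of elements expressible as a ratio of weighted-homogeneous elements of the
same degree. -/
def degZeroSubfield {L : Type*} [Field L] (F : Subfield L) {ι : Type*} (v : ι → L)
    {D : Type*} [AddCommMonoid D] (w : ι → D) : Subfield L where
  carrier := {x | ∃ (p q : MvPolynomial ι F) (d : D),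
    p.IsWeightedHomogeneous w d ∧ q.IsWeightedHomogeneous w d ∧
    MvPolynomial.aeval v q ≠ 0 ∧ x * MvPolynomial.aeval v q = MvPolynomial.aeval v p}
  zero_mem' := ⟨0, 1, 0, isWeightedHomogeneous_zero _ _ _, isWeightedHomogeneous_one _ _,
    by simp, by simp⟩
  one_mem' := ⟨1, 1, 0, isWeightedHomogeneous_one _ _, isWeightedHomogeneous_one _ _,
    by simp, by simp⟩
  add_mem' := by
    rintro x z ⟨p1, q1, d1, hp1, hq1, hq1z, he1⟩ ⟨p2, q2, d2, hp2, hq2, hq2z, he2⟩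
    refine ⟨p1 * q2 + p2 * q1, q1 * q2, d1 + d2, ?_, hq1.mul hq2, by
      rw [map_mul]; exact mul_ne_zero hq1z hq2z, ?_⟩
    · apply IsWeightedHomogeneous.add (hp1.mul hq2)
      have := hp2.mul hq1
      rwa [add_comm d2 d1] at this
    · rw [map_add, map_mul, map_mul, map_mul]
      calc (x + z) * (MvPolynomial.aeval v q1 * MvPolynomial.aeval v q2)
          = (x * MvPolynomial.aeval v q1) * MvPolynomial.aeval v q2
            + (z * MvPolynomial.aeval v q2) * MvPolynomial.aeval v q1 := by ring
        _ = _ := by rw [he1, he2]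
  neg_mem' := by
    rintro x ⟨p, q, d, hp, hq, hqz, he⟩
    refine ⟨-p, q, d, fun m hm => hp (by rwa [coeff_neg, neg_ne_zero] at hm), hq, hqz, ?_⟩
    rw [map_neg, ← he]; ring
  mul_mem' := by
    rintro x z ⟨p1, q1, d1, hp1, hq1, hq1z, he1⟩ ⟨p2, q2, d2, hp2, hq2, hq2z, he2⟩
    refine ⟨p1 * p2, q1 * q2, d1 + d2, hp1.mul hp2, hq1.mul hq2, by
      rw [map_mul]; exact mul_ne_zero hq1z hq2z, ?_⟩
    rw [map_mul, map_mul, ← he1, ← he2]; ring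
  inv_mem' := by
    rintro x ⟨p, q, d, hp, hq, hqz, he⟩
    rcases eq_or_ne x 0 with rfl | hx0
    · exact ⟨0, 1, 0, isWeightedHomogeneous_zero _ _ _, isWeightedHomogeneous_one _ _,
        by simp, by simp⟩
    · have hpz : MvPolynomial.aeval v p ≠ 0 := by
        rw [← he]; exact mul_ne_zero hx0 hqz
      refine ⟨q, p, d, hq, hp, hpz, ?_⟩
      rw [← he, ← mul_assoc, inv_mul_cancel₀ hx0, one_mul]

theorem mem_degZeroSubfield {L : Type*} [Field L] {F : Subfield L} {ι : Type*} {v : ι → L}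
    {D : Type*} [AddCommMonoid D] {w : ι → D} {x : L} :
    x ∈ degZeroSubfield F v w ↔ ∃ (p q : MvPolynomial ι F) (d : D),
      p.IsWeightedHomogeneous w d ∧ q.IsWeightedHomogeneous w d ∧
      MvPolynomial.aeval v q ≠ 0 ∧ x * MvPolynomial.aeval v q = MvPolynomial.aeval v p :=
  Iff.rfl


/-- `F⟨S⟩`: the smallest differential subfield of `L` containing the subfield `F` and the
set `S`, i.e. the subfield generated by `F` together with all iterated derivatives of
elements of `S`. -/
def diffAdjoin {L : Type*} [Field L] (δ : L → L) (F : Subfield L) (S : Set L) : Subfield L :=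
  Subfield.closure (↑F ∪ {x | ∃ s ∈ S, ∃ m : ℕ, δ^[m] s = x})

/-- Let `F` be a differential field of characteristic zero whose field of constants `C` is
algebraically closed, let `n ≥ 1`, `k ≥ 2`, and let `L = F⟨y_{ij}⟩` for `n²` elements
`y_{ij}` that are differentially algebraically independent over `F`.  With
`S = {y_{1j}^k} ∪ {y_{1j}^{k-1}·y_{ij} : i ≥ 2}` we have `L = F⟨S⟩(y_{11}, …, y_{1n})`,
and `L/F⟨S⟩` is a finite extension of degree exactly `kⁿ`. -/
theorem fixed_field_of_muk_power
    (L : Type*) [Field L] [CharZero L] (δ : L → L)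
    (hδadd : ∀ a b : L, δ (a + b) = δ a + δ b)
    (hδmul : ∀ a b : L, δ (a * b) = a * δ b + δ a * b)
    (F : Subfield L) (hFδ : ∀ x ∈ F, δ x ∈ F)
    (C : Subfield L) (hC : ∀ x : L, x ∈ C ↔ x ∈ F ∧ δ x = 0) (hCalg : IsAlgClosed C)
    (n k : ℕ) (hn : 1 ≤ n) (hk : 2 ≤ k)
    (y : Fin n → Fin n → L)
    (hindep : AlgebraicIndependent F
      (fun p : (Fin n × Fin n) × ℕ => δ^[p.2] (y p.1.1 p.1.2)))
    (hgen : diffAdjoin δ F {x | ∃ i j, y i j = x} = ⊤)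
    (S : Set L)
    (hS : S = {x | ∃ j, x = (y ⟨0, hn⟩ j) ^ k} ∪
      {x | ∃ i j, i ≠ ⟨0, hn⟩ ∧ x = (y ⟨0, hn⟩ j) ^ (k - 1) * y i j}) :
    Subfield.closure ((diffAdjoin δ F S : Set L) ∪ Set.range (y ⟨0, hn⟩)) = ⊤ ∧
    FiniteDimensional (diffAdjoin δ F S) L ∧
    Module.finrank (diffAdjoin δ F S) L = k ^ n := by
  classical
  set i0 : Fin n := ⟨0, hn⟩ with hi0
  set K : Subfield L := diffAdjoin δ F S with hK
  have hKδ : ∀ x ∈ K, δ x ∈ K := diffAdjoin_deriv_mem' hδadd hδmul F hFδ S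
  have hFK : ∀ x ∈ F, (x : L) ∈ K := fun x hx => Subfield.subset_closure (Or.inl hx)
  have hSK : ∀ s ∈ S, s ∈ K := fun s hs => Subfield.subset_closure (Or.inr ⟨s, hs, 0, rfl⟩)
  have haK : ∀ j, (y i0 j) ^ k ∈ K := fun j => hSK _ (by rw [hS]; exact Or.inl ⟨j, rfl⟩)
  have hbK : ∀ i j, i ≠ i0 → (y i0 j) ^ (k - 1) * y i j ∈ K :=
    fun i j hi => hSK _ (by rw [hS]; exact Or.inr ⟨i, j, hi, rfl⟩)
  set ι : Type := (Fin n × Fin n) × ℕ with hι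
  set v : ι → L := fun p => δ^[p.2] (y p.1.1 p.1.2) with hv'
  have hinj : Function.Injective (MvPolynomial.aeval v : MvPolynomial ι F →ₐ[F] L) :=
    algebraicIndependent_iff_injective_aeval.mp hindep
  have hynz : ∀ i j, y i j ≠ 0 := by
    intro i j h
    have h2 : MvPolynomial.aeval v (X (((i, j), 0) : ι) : MvPolynomial ι F)
        = MvPolynomial.aeval v (0 : MvPolynomial ι F) := by
      rw [aeval_X, map_zero]; exact h
    exact X_ne_zero (R := ↥F) (((i, j), 0) : ι) (hinj h2)
  have hk0 : (0:ℕ) < k := by omega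
  have hkL : (k : L) ≠ 0 := Nat.cast_ne_zero.mpr (by omega)
  -- Part 1
  set T1 : Set L := ↑K ∪ Set.range (y i0) with hT1
  have hKM : ∀ x ∈ K, x ∈ Subfield.closure T1 :=
    fun x hx => Subfield.subset_closure (Or.inl hx)
  have hyM : ∀ j, y i0 j ∈ Subfield.closure T1 :=
    fun j => Subfield.subset_closure (Or.inr ⟨j, rfl⟩)
  have hMδ : ∀ x ∈ Subfield.closure T1, δ x ∈ Subfield.closure T1 := by
    apply closure_deriv_mem hδadd hδmul
    rintro x (hx | ⟨j, rfl⟩)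
    · exact hKM _ (hKδ x hx)
    · have hane : y i0 j ^ (k - 1) ≠ 0 := pow_ne_zero _ (hynz i0 j)
      have h1 : δ (y i0 j) = δ (y i0 j ^ k) * ((k : L) * y i0 j ^ (k - 1))⁻¹ := by
        rw [dpow' hδmul _ k (by omega)]
        field_simp
      rw [h1]
      exact mul_mem (hKM _ (hKδ _ (haK j)))
        (inv_mem (mul_mem (natCast_mem _ k) (pow_mem (hyM j) _)))
  have hyallM : ∀ i j, y i j ∈ Subfield.closure T1 := by
    intro i j
    by_cases hi : i = i0
    · subst hi; exact hyM j
    · have hane : y i0 j ^ (k - 1) ≠ 0 := pow_ne_zero _ (hynz i0 j)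
      have h2 : y i j = y i0 j ^ (k - 1) * y i j * (y i0 j ^ (k - 1))⁻¹ := by
        field_simp
      rw [h2]
      exact mul_mem (hKM _ (hbK i j hi)) (inv_mem (pow_mem (hyM j) _))
  have hMtop : Subfield.closure T1 = ⊤ := by
    rw [eq_top_iff, ← hgen]
    show diffAdjoin δ F _ ≤ _
    rw [diffAdjoin]
    apply Subfield.closure_le.mpr
    rintro x (hx | ⟨s, ⟨i, j, rfl⟩, m, rfl⟩)
    · exact hKM _ (hFK x hx)
    · induction m with
      | zero => exact hyallM i j
      | succ m ih => rw [Function.iterate_succ_apply']; exact hMδ _ ih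
  -- Part 2 : weights and the degree-zero subfield
  set w : ι → (Fin n → ZMod k) := fun s => Pi.single s.1.2 (1 : ZMod k) with hw'
  have hvb : ∀ s : ι, δ (v s) = v ((s.1, s.2 + 1) : ι) := fun s =>
    (Function.iterate_succ_apply' δ s.2 (y s.1.1 s.1.2)).symm
  have hwb : ∀ s : ι, w ((s.1, s.2 + 1) : ι) = w s := fun s => rfl
  have hsingle0 : ∀ j : Fin n, (k • (Pi.single j (1 : ZMod k) : Fin n → ZMod k)) = 0 := by
    intro j; funext j'
    rcases eq_or_ne j' j with rfl | hne
    · simp [nsmul_eq_mul, ZMod.natCast_self]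
    · simp [Pi.single_apply, hne]
  have hSrep : ∀ s ∈ S, ∃ p : MvPolynomial ι F,
      p.IsWeightedHomogeneous w 0 ∧ s = MvPolynomial.aeval v p := by
    intro s hs
    rw [hS] at hs
    rcases hs with ⟨j, rfl⟩ | ⟨i, j, hi, rfl⟩
    · refine ⟨X (((i0, j), 0) : ι) ^ k, ?_, ?_⟩
      · have h1 := isWH_X_pow (w := w) (R := ↥F) (((i0, j), 0) : ι) k
        rwa [show w (((i0, j), 0) : ι) = Pi.single j (1 : ZMod k) from rfl,
          hsingle0 j] at h1
      · rw [map_pow, aeval_X]; rfl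
    · refine ⟨X (((i0, j), 0) : ι) ^ (k - 1) * X (((i, j), 0) : ι), ?_, ?_⟩
      · have h1 := (isWH_X_pow (w := w) (R := ↥F) (((i0, j), 0) : ι) (k - 1)).mul
          (isWeightedHomogeneous_X ↥F w (((i, j), 0) : ι))
        have h2 : (k - 1) • w (((i0, j), 0) : ι) + w (((i, j), 0) : ι) = 0 := by
          have h3 : w (((i, j), 0) : ι) = w (((i0, j), 0) : ι) := rfl
          rw [h3, ← succ_nsmul, Nat.sub_add_cancel (by omega : 1 ≤ k)]
          exact hsingle0 j
        rwa [h2] at h1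
      · rw [map_mul, map_pow, aeval_X, aeval_X]; rfl
  set W0 : Subfield L := degZeroSubfield F v w with hW0def
  have hKW0 : ∀ x ∈ K, x ∈ W0 := by
    intro x hx
    have : K ≤ W0 := by
      rw [hK]
      show Subfield.closure _ ≤ W0
      apply Subfield.closure_le.mpr
      rintro x (hx | ⟨s, hsS, m, rfl⟩)
      · obtain ⟨p0, hp0⟩ : ∃ p0 : MvPolynomial ι F,
            p0.IsWeightedHomogeneous w 0 ∧ (x : L) = MvPolynomial.aeval v p0 :=
          ⟨MvPolynomial.C ⟨x, hx⟩, isWeightedHomogeneous_C _ _, by rw [aeval_C]; rfl⟩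
        exact mem_degZeroSubfield.mpr ⟨p0, 1, 0, hp0.1, isWeightedHomogeneous_one _ _, by simp, by
          rw [map_one, mul_one]; exact hp0.2⟩
      · have key : ∀ m : ℕ, ∃ p : MvPolynomial ι F,
            p.IsWeightedHomogeneous w 0 ∧ δ^[m] s = MvPolynomial.aeval v p := by
          intro m
          induction m with
          | zero => exact hSrep s hsS
          | succ m ih =>
            obtain ⟨p, hphom, hpeq⟩ := ih
            obtain ⟨p', hp'hom, hp'eq⟩ :=
              deriv_aeval_homog hδadd hδmul hFδ hvb hwb hphom
            exact ⟨p', hp'hom, by rw [Function.iterate_succ_apply', hpeq, hp'eq]⟩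
        obtain ⟨p, hphom, hpeq⟩ := key m
        exact mem_degZeroSubfield.mpr ⟨p, 1, 0, hphom, isWeightedHomogeneous_one _ _, by simp, by
          rw [map_one, mul_one]; exact hpeq⟩
    exact this hx
  refine ⟨hMtop, ?_⟩
  -- the monomials in the first row
  let Mon : (Fin n → Fin k) → L := fun e => ∏ j, y i0 j ^ ((e j : ℕ))
  have hMonne : ∀ e, Mon e ≠ 0 := fun e =>
    Finset.prod_ne_zero_iff.mpr fun j _ => pow_ne_zero _ (hynz i0 j)
  let Xmon : (Fin n → Fin k) → MvPolynomial ι F :=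
    fun e => ∏ j, X (((i0, j), 0) : ι) ^ ((e j : ℕ))
  have hXmon_eval : ∀ e, MvPolynomial.aeval v (Xmon e) = Mon e := by
    intro e
    rw [map_prod]
    exact Finset.prod_congr rfl fun j _ => by rw [map_pow, aeval_X]; rfl
  have hXmon_ne : ∀ e, Xmon e ≠ 0 := by
    intro e h
    exact hMonne e (by rw [← hXmon_eval e, h, map_zero])
  have hXmon_hom : ∀ e, (Xmon e).IsWeightedHomogeneous w
      (∑ j, ((e j : ℕ)) • (Pi.single j (1 : ZMod k) : Fin n → ZMod k)) := by
    intro e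
    exact IsWeightedHomogeneous.prod _ _ _ fun j _ => isWH_X_pow _ _
  have heval : ∀ (e : Fin n → Fin k) (j : Fin n),
      (∑ j', ((e j' : ℕ)) • (Pi.single j' (1 : ZMod k) : Fin n → ZMod k)) j
        = ((e j : ℕ) : ZMod k) := by
    intro e j
    rw [Finset.sum_apply]
    rw [Finset.sum_eq_single j]
    · simp [nsmul_eq_mul]
    · intro j' _ hj'
      have h0 : (Pi.single j' (1 : ZMod k) : Fin n → ZMod k) j = 0 :=
        Pi.single_eq_of_ne (Ne.symm hj') _
      rw [Pi.smul_apply, h0, smul_zero]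
    · intro h; exact absurd (Finset.mem_univ j) h
  have hdeg_inj : Function.Injective
      (fun e : Fin n → Fin k =>
        ∑ j, ((e j : ℕ)) • (Pi.single j (1 : ZMod k) : Fin n → ZMod k)) := by
    intro e e' hee
    funext j
    have h1 : ((e j : ℕ) : ZMod k) = ((e' j : ℕ) : ZMod k) :=
      (heval e j).symm.trans ((congrFun hee j).trans (heval e' j))
    have h2 : (e j : ℕ) = (e' j : ℕ) := by
      have h3 := congrArg ZMod.val h1
      rwa [ZMod.val_cast_of_lt (e j).2, ZMod.val_cast_of_lt (e' j).2] at h3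
    exact Fin.ext h2
  -- linear independence of the monomials over K
  have hLI : LinearIndependent K Mon := by
    rw [Fintype.linearIndependent_iff]
    intro g hg e0
    have hgm : ∀ e, (g e : L) ∈ W0 := fun e => hKW0 _ (g e).2
    choose p q dd hp hq hqz heqn using fun e => mem_degZeroSubfield.mp (hgm e)
    have hQz : (∏ e, MvPolynomial.aeval v (q e)) ≠ 0 :=
      Finset.prod_ne_zero_iff.mpr fun e _ => hqz e
    set Q : L := ∏ e, MvPolynomial.aeval v (q e) with hQ
    set dQ : Fin n → ZMod k := ∑ e, dd e with hdQ
    let r : (Fin n → Fin k) → MvPolynomial ι F :=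
      fun e => p e * ∏ e' ∈ Finset.univ.erase e, q e'
    have hr_hom : ∀ e, (r e).IsWeightedHomogeneous w dQ := by
      intro e
      have h1 := (hp e).mul
        (IsWeightedHomogeneous.prod (Finset.univ.erase e) q dd fun e' _ => hq e')
      rwa [Finset.add_sum_erase _ dd (Finset.mem_univ e)] at h1
    have hr_eval : ∀ e, MvPolynomial.aeval v (r e) = (g e : L) * Q := by
      intro e
      rw [map_mul, ← heqn e, map_prod, hQ,
        ← Finset.mul_prod_erase _ _ (Finset.mem_univ e)]
      ring
    have hT : ∑ e, r e * Xmon e = 0 := by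
      apply hinj
      rw [map_sum, map_zero]
      have h4 : ∀ e : Fin n → Fin k,
          MvPolynomial.aeval v (r e * Xmon e) = Q * ((g e : L) * Mon e) := by
        intro e; rw [map_mul, hr_eval, hXmon_eval]; ring
      rw [Finset.sum_congr rfl fun e _ => h4 e, ← Finset.mul_sum]
      have hg' : ∑ e, (g e : L) * Mon e = 0 := by
        calc ∑ e, (g e : L) * Mon e = ∑ e, g e • Mon e :=
              Finset.sum_congr rfl fun e _ =>
                (Algebra.smul_def (R := ↥K) (A := L) (g e) (Mon e)).symm
          _ = 0 := hg
      rw [hg', mul_zero]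
    have hre0 : r e0 * Xmon e0 = 0 :=
      homog_sum_eq_zero (t := fun e => r e * Xmon e)
        (dg := fun e => dQ + ∑ j, ((e j : ℕ)) • (Pi.single j (1 : ZMod k) : Fin n → ZMod k))
        (fun e => (hr_hom e).mul (hXmon_hom e))
        (fun e e' h => hdeg_inj (by exact add_left_cancel h)) hT e0
    have hr0 : r e0 = 0 := by
      rcases mul_eq_zero.mp hre0 with h | h
      · exact h
      · exact absurd h (hXmon_ne e0)
    have : (g e0 : L) * Q = 0 := by rw [← hr_eval, hr0, map_zero]
    have hge0 : (g e0 : L) = 0 := by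
      rcases mul_eq_zero.mp this with h | h
      · exact h
      · exact absurd h hQz
    exact Subtype.ext hge0
  -- spanning
  have hMon1 : Mon (fun _ => (⟨0, hk0⟩ : Fin k)) = 1 := by
    simp [Mon]
  have hmulMon : ∀ e e' : Fin n → Fin k, ∃ c : L, c ∈ K ∧
      Mon e * Mon e' =
        c * Mon (fun j => ⟨((e j : ℕ) + (e' j : ℕ)) % k, Nat.mod_lt _ hk0⟩) := by
    intro e e'
    refine ⟨∏ j, (y i0 j ^ k) ^ (((e j : ℕ) + (e' j : ℕ)) / k),
      prod_mem fun j _ => pow_mem (haK j) _, ?_⟩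
    show (∏ j, y i0 j ^ ((e j : ℕ))) * (∏ j, y i0 j ^ ((e' j : ℕ)))
      = (∏ j, (y i0 j ^ k) ^ (((e j : ℕ) + (e' j : ℕ)) / k)) * ∏ j, y i0 j ^ _
    rw [← Finset.prod_mul_distrib, ← Finset.prod_mul_distrib]
    apply Finset.prod_congr rfl
    intro j _
    rw [← pow_add, ← pow_mul, ← pow_add]
    congr 1
    exact (Nat.div_add_mod _ k).symm
  have h1V : (1 : L) ∈ Submodule.span K (Set.range Mon) :=
    hMon1 ▸ Submodule.subset_span ⟨_, rfl⟩
  have hmul1 : ∀ (e : Fin n → Fin k), ∀ z ∈ Submodule.span K (Set.range Mon),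
      Mon e * z ∈ Submodule.span K (Set.range Mon) := by
    intro e z hz
    induction hz using Submodule.span_induction with
    | mem z hzm =>
      obtain ⟨e', rfl⟩ := hzm
      obtain ⟨c, hc, hce⟩ := hmulMon e e'
      rw [hce]
      have hsm : c * Mon (fun j => ⟨((e j : ℕ) + (e' j : ℕ)) % k, Nat.mod_lt _ hk0⟩)
          = (⟨c, hc⟩ : K) • Mon (fun j => ⟨((e j : ℕ) + (e' j : ℕ)) % k, Nat.mod_lt _ hk0⟩) :=
        (Algebra.smul_def (R := ↥K) (A := L) ⟨c, hc⟩ _).symm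
      rw [hsm]
      exact Submodule.smul_mem _ _ (Submodule.subset_span ⟨_, rfl⟩)
    | zero => rw [mul_zero]; exact zero_mem _
    | add a b ha hb iha ihb => rw [mul_add]; exact add_mem iha ihb
    | smul c a ha ih => rw [mul_smul_comm]; exact Submodule.smul_mem _ _ ih
  have hmulV : ∀ x ∈ Submodule.span K (Set.range Mon),
      ∀ z ∈ Submodule.span K (Set.range Mon),
      x * z ∈ Submodule.span K (Set.range Mon) := by
    intro x hx
    induction hx using Submodule.span_induction with
    | mem x hxm => obtain ⟨e, rfl⟩ := hxm; exact hmul1 e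
    | zero => intro z hz; rw [zero_mul]; exact zero_mem _
    | add a b ha hb iha ihb =>
      intro z hz; rw [add_mul]; exact add_mem (iha z hz) (ihb z hz)
    | smul c a ha ih =>
      intro z hz; rw [smul_mul_assoc]; exact Submodule.smul_mem _ _ (ih z hz)
  have hKV : ∀ c ∈ K, c ∈ Submodule.span K (Set.range Mon) := by
    intro c hc
    have hsm : (⟨c, hc⟩ : K) • (1 : L) = c := by
      rw [Algebra.smul_def, mul_one]; rfl
    exact hsm ▸ Submodule.smul_mem _ _ h1V
  have hyV : ∀ j, y i0 j ∈ Submodule.span K (Set.range Mon) := by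
    intro j
    have hMe : Mon (fun j' => if j' = j then (⟨1, by omega⟩ : Fin k) else ⟨0, hk0⟩)
        = y i0 j := by
      show (∏ j', y i0 j' ^ (((if j' = j then (⟨1, by omega⟩ : Fin k) else (⟨0, hk0⟩ : Fin k)) : Fin k) : ℕ))
        = y i0 j
      rw [Finset.prod_eq_single j]
      · rw [if_pos rfl]; exact pow_one _
      · intro j' _ hj'; rw [if_neg hj']; exact pow_zero _
      · intro h; exact absurd (Finset.mem_univ j) h
    exact hMe ▸ Submodule.subset_span ⟨_, rfl⟩
  let A0 : Subalgebra K L :=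
    { carrier := Submodule.span K (Set.range Mon)
      mul_mem' := fun hx hz => hmulV _ hx _ hz
      one_mem' := h1V
      add_mem' := fun hx hz => add_mem hx hz
      zero_mem' := zero_mem _
      algebraMap_mem' := fun c => hKV (c : L) c.2 }
  have hA0sub : Subalgebra.toSubmodule A0 = Submodule.span K (Set.range Mon) := rfl
  have hA0fg : (Subalgebra.toSubmodule A0).FG := by
    rw [hA0sub]; exact Submodule.fg_span (Set.finite_range Mon)
  have hinvV : ∀ x ∈ Submodule.span K (Set.range Mon),
      x⁻¹ ∈ Submodule.span K (Set.range Mon) := by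
    intro x hx
    have hint : IsIntegral K x := IsIntegral.of_mem_of_fg A0 hA0fg x hx
    exact hint.inv_mem (A := A0) hx
  let Wsf : Subfield L :=
    { carrier := Submodule.span K (Set.range Mon)
      mul_mem' := fun hx hz => hmulV _ hx _ hz
      one_mem' := h1V
      add_mem' := fun hx hz => add_mem hx hz
      zero_mem' := zero_mem _
      neg_mem' := fun hx => neg_mem hx
      inv_mem' := fun x hx => hinvV x hx }
  have hVtop : ∀ x : L, x ∈ Submodule.span K (Set.range Mon) := by
    intro x
    have hx : x ∈ Subfield.closure T1 := hMtop ▸ Subfield.mem_top x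
    have hle : Subfield.closure T1 ≤ Wsf := by
      apply Subfield.closure_le.mpr
      rintro z (hz | ⟨j, rfl⟩)
      · exact hKV z hz
      · exact hyV j
    exact hle hx
  have hVtop' : Submodule.span K (Set.range Mon) = ⊤ :=
    eq_top_iff.mpr fun x _ => hVtop x
  constructor
  · exact ⟨hVtop' ▸ Submodule.fg_span (Set.finite_range Mon)⟩
  · have B : Module.Basis (Fin n → Fin k) K L := Module.Basis.mk hLI (by rw [hVtop'])
    rw [Module.finrank_eq_card_basis B, Fintype.card_fun]
    simp
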